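/- Let g(u) = f*(Aᵀu) where f : R^n → R ∪ {∞} is proper closed convex, A : R^n → R^m linear, and ri(dom f*) ∩ range(Aᵀ) ≠ ∅. Then v = prox_{αg}(u) if and only if there exists x ∈ argmin_y { f(y) − ⟨u, Ay⟩ + (α/2)‖Ay‖² } such that v = u − αAx. -/

import Mathlib

open scoped RealInnerProductSpace

/-- Fenchel conjugate of an extended-real-valued function. -/
noncomputable def fenchelConj {n : ℕ} (f : EuclideanSpace ℝ (Fin n) → EReal)
    (y : EuclideanSpace ℝ (Fin n)) : EReal :=
  ⨆ x : EuclideanSpace ℝ (Fin n), ((⟪y, x⟫ : ℝ) : EReal) - f x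

/-- Extension lemma: a vector `c₁ ∈ W` orthogonal to `S ⊓ W` can be modified by a vector
orthogonal to `W` so as to become orthogonal to all of `S`. -/
lemma extend_orth {E : Type*} [NormedAddCommGroup E] [InnerProductSpace ℝ E]
    [FiniteDimensional ℝ E] (S W : Submodule ℝ E) (c₁ : E) (hc₁W : c₁ ∈ W)
    (horth : ∀ x ∈ S ⊓ W, ⟪c₁, x⟫ = 0) :
    ∃ c : E, (∀ s ∈ S, ⟪c, s⟫ = 0) ∧ ∀ w ∈ W, ⟪c, w⟫ = ⟪c₁, w⟫ := by
  classical
  -- X := image of Sᗮ under orthogonal projection onto W (viewed inside E)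
  set P : E →L[ℝ] W := Submodule.orthogonalProjection W with hP
  set X : Submodule ℝ E := Submodule.map ((W.subtype).comp (P : E →ₗ[ℝ] W))
      Sᗮ with hX
  have hXW : X ≤ W := by
    rintro x ⟨y, -, rfl⟩; exact (P y).2
  -- decompose c₁ relative to X
  have hc1 : c₁ - ((Submodule.orthogonalProjection X c₁ : E)) ∈ Xᗮ :=
    Submodule.sub_starProjection_mem_orthogonal c₁
  set y : E := c₁ - ((Submodule.orthogonalProjection X c₁ : E)) with hy
  have hyW : y ∈ W := by
    exact Submodule.sub_mem W hc₁W (hXW (Submodule.orthogonalProjection X c₁).2)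
  -- y ∈ S
  have hyS : y ∈ S := by
    rw [← Submodule.orthogonal_orthogonal S]
    intro z hz
    have hPz : ((P z : E)) ∈ X := ⟨z, hz, rfl⟩
    have h1 : ⟪z, y⟫ = ⟪(P z : E), y⟫ := by
      have := Submodule.starProjection_inner_eq_zero (K := W) z y hyW
      -- ⟪z - P z, y⟫ = 0
      have h2 : ⟪z - (P z : E), y⟫ = 0 := this
      rw [inner_sub_left] at h2; linarith
    rw [h1]
    exact hc1 _ hPz
  have hyy : ⟪y, y⟫ = 0 := by
    have h0 : ⟪c₁, y⟫ = 0 := horth y ⟨hyS, hyW⟩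
    have h1 : ⟪(Submodule.orthogonalProjection X c₁ : E), y⟫ = 0 := by
      exact hc1 _ (Submodule.orthogonalProjection X c₁).2
    have : ⟪c₁ - (Submodule.orthogonalProjection X c₁ : E), y⟫ = 0 := by
      rw [inner_sub_left, h0, h1]; ring
    exact this
  have hy0 : y = 0 := by
    have := inner_self_eq_zero (𝕜 := ℝ) (x := y); exact this.mp hyy
  have hc₁X : c₁ ∈ X := by
    have : c₁ = (Submodule.orthogonalProjection X c₁ : E) := by
      have := sub_eq_zero.mp (hy ▸ hy0 : c₁ - _ = 0); exact this
    rw [this]; exact (Submodule.orthogonalProjection X c₁).2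
  obtain ⟨c, hcS, hc⟩ := hc₁X
  refine ⟨c, fun s hs => by rw [real_inner_comm]; exact hcS s hs, fun w hw => ?_⟩
  have h1 : ⟪c - (P c : E), w⟫ = 0 := Submodule.starProjection_inner_eq_zero (K := W) c w hw
  rw [inner_sub_left] at h1
  have h2 : (P c : E) = c₁ := hc
  rw [← h2]; linarith

set_option maxHeartbeats 1000000 in
/-- Key separation lemma: if `p ∈ S` minimizes the convex function `h` over the subspace `S`,
`h p` is finite, and the relative interior of the domain of `h` meets `S`, then there is a
subgradient of `h` at `p` orthogonal to `S`. -/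
lemma key_subgradient {E : Type*} [NormedAddCommGroup E] [InnerProductSpace ℝ E]
    [FiniteDimensional ℝ E]
    (h : E → EReal) (hnb : ∀ z, h z ≠ ⊥)
    (hconv : ∀ x y : E, ∀ t : ℝ, 0 ≤ t → t ≤ 1 →
      h (t • x + (1 - t) • y) ≤ (t : EReal) * h x + ((1 - t : ℝ) : EReal) * h y)
    (S : Submodule ℝ E) (p : E) (hpS : p ∈ S) (hpfin : h p ≠ ⊤)
    (sb : E) (hsbS : sb ∈ S) (hsbri : sb ∈ intrinsicInterior ℝ {z | h z ≠ ⊤})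
    (hmin : ∀ s ∈ S, h p ≤ h s) :
    ∃ c : E, (∀ s ∈ S, ⟪c, s⟫ = 0) ∧
      ∀ z, h p + ((⟪c, z - p⟫ : ℝ) : EReal) ≤ h z := by
  classical
  set D : Set E := {z | h z ≠ ⊤} with hD
  have hsbD : sb ∈ D := intrinsicInterior_subset hsbri
  have hpD : p ∈ D := hpfin
  set W : Submodule ℝ E := (affineSpan ℝ D).direction with hWdef
  have hmemW : ∀ z ∈ D, z - sb ∈ W := by
    intro z hz
    have := AffineSubspace.vsub_mem_direction (subset_affineSpan ℝ D hz)
      (subset_affineSpan ℝ D hsbD)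
    simpa using this
  -- extract a relative ball around sb
  obtain ⟨y0, hy0int, hy0⟩ := mem_intrinsicInterior.mp hsbri
  obtain ⟨U, hUsub, hUopen, hy0U⟩ := mem_interior.mp hy0int
  obtain ⟨ε, hε, hball⟩ := Metric.isOpen_iff.mp hUopen y0 hy0U
  have hrel : ∀ w : E, w ∈ W → ‖w‖ < ε → sb + w ∈ D := by
    intro w hwW hwn
    have hsbspan : sb ∈ affineSpan ℝ D := subset_affineSpan ℝ D hsbD
    have hmem : sb + w ∈ affineSpan ℝ D := by
      have := AffineSubspace.vadd_mem_of_mem_direction hwW hsbspan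
      simpa [vadd_eq_add, add_comm] using this
    have hdist : dist (⟨sb + w, hmem⟩ : affineSpan ℝ D) y0 < ε := by
      rw [Subtype.dist_eq, hy0]
      simpa [dist_eq_norm] using hwn
    exact hUsub (hball hdist)
  -- move to the subtype W
  have hpW : p - sb ∈ W := hmemW p hpD
  set p' : W := ⟨p - sb, hpW⟩ with hp'def
  set m : ℝ := (h p).toReal with hmdef
  have hhp : h p = (m : EReal) := (EReal.coe_toReal hpfin (hnb p)).symm
  set hwf : W → EReal := fun w => h (sb + (w : E)) with hwfdef
  have hwfp' : hwf p' = (m : EReal) := by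
    rw [hwfdef]; simp only [hp'def]
    rw [show sb + (p - sb) = p by abel, hhp]
  have hwnb : ∀ w : W, hwf w ≠ ⊥ := fun w => hnb _
  -- convexity of hwf
  have hconvW : ∀ (x y : W) (t : ℝ), 0 ≤ t → t ≤ 1 →
      hwf (t • x + (1 - t) • y) ≤ (t : EReal) * hwf x + ((1 - t : ℝ) : EReal) * hwf y := by
    intro x y t h0 h1
    have key := hconv (sb + x) (sb + y) t h0 h1
    have harg : t • (sb + (x:E)) + (1 - t) • (sb + (y:E)) = sb + ((t • x + (1 - t) • y : W) : E) := by
      push_cast; module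
    rw [harg] at key
    exact key
  -- the epigraph
  set epi : Set (W × ℝ) := {q | hwf q.1 ≤ (q.2 : EReal)} with hepidef
  have hepiconv : Convex ℝ epi := by
    intro q hq r hr a b ha hb hab
    have hb' : b = 1 - a := by linarith
    subst hb'
    have hq' : hwf q.1 ≤ (q.2 : EReal) := hq
    have hr' : hwf r.1 ≤ (r.2 : EReal) := hr
    have hqt : hwf q.1 ≠ ⊤ := ne_top_of_le_ne_top (EReal.coe_ne_top _) hq'
    have hrt : hwf r.1 ≠ ⊤ := ne_top_of_le_ne_top (EReal.coe_ne_top _) hr'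
    have hqe : hwf q.1 = ((hwf q.1).toReal : EReal) := (EReal.coe_toReal hqt (hwnb _)).symm
    have hre : hwf r.1 = ((hwf r.1).toReal : EReal) := (EReal.coe_toReal hrt (hwnb _)).symm
    have hq2 : (hwf q.1).toReal ≤ q.2 := by rw [hqe] at hq'; exact_mod_cast hq'
    have hr2 : (hwf r.1).toReal ≤ r.2 := by rw [hre] at hr'; exact_mod_cast hr'
    show hwf (a • q.1 + (1-a) • r.1) ≤ (((a • q + (1-a) • r : W × ℝ).2 : ℝ) : EReal)
    refine le_trans (hconvW q.1 r.1 a ha (by linarith)) ?_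
    rw [hqe, hre]
    have hcoe : (a : EReal) * ((hwf q.1).toReal : EReal) + ((1 - a : ℝ) : EReal) * ((hwf r.1).toReal : EReal)
        = ((a * (hwf q.1).toReal + (1 - a) * (hwf r.1).toReal : ℝ) : EReal) := by
      rw [← EReal.coe_mul, ← EReal.coe_mul, ← EReal.coe_add]
    rw [hcoe]
    have : (a • q + (1-a) • r : W × ℝ).2 = a * q.2 + (1-a) * r.2 := rfl
    rw [this]
    apply EReal.coe_le_coe_iff.mpr
    have := mul_le_mul_of_nonneg_left hq2 ha
    have := mul_le_mul_of_nonneg_left hr2 hb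
    nlinarith
  -- real-valued version near 0 and continuity
  have hball0 : ∀ w : W, ‖w‖ < ε → hwf w ≠ ⊤ := by
    intro w hw
    exact hrel w w.2 hw
  set H : W → ℝ := fun w => (hwf w).toReal with hHdef
  have hHconv : ConvexOn ℝ (Metric.ball (0 : W) ε) H := by
    refine ⟨convex_ball _ _, ?_⟩
    intro x hx y hy a b ha hb hab
    have hb' : b = 1 - a := by linarith
    subst hb'
    have hmem : a • x + (1-a) • y ∈ Metric.ball (0 : W) ε :=
      (convex_ball (0:W) ε) hx hy ha hb hab
    have h1 : hwf (a • x + (1-a) • y) ≤ (a : EReal) * hwf x + ((1 - a : ℝ) : EReal) * hwf y :=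
      hconvW x y a ha (by linarith)
    have hxt : hwf x ≠ ⊤ := hball0 x (by simpa [Metric.mem_ball, dist_eq_norm] using hx)
    have hyt : hwf y ≠ ⊤ := hball0 y (by simpa [Metric.mem_ball, dist_eq_norm] using hy)
    have hzt : hwf (a • x + (1-a) • y) ≠ ⊤ :=
      hball0 _ (by simpa [Metric.mem_ball, dist_eq_norm] using hmem)
    have hxe : hwf x = ((H x : ℝ) : EReal) := (EReal.coe_toReal hxt (hwnb _)).symm
    have hye : hwf y = ((H y : ℝ) : EReal) := (EReal.coe_toReal hyt (hwnb _)).symm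
    have hze : hwf _ = ((H (a • x + (1-a) • y) : ℝ) : EReal) := (EReal.coe_toReal hzt (hwnb _)).symm
    rw [hze, hxe, hye] at h1
    rw [← EReal.coe_mul, ← EReal.coe_mul, ← EReal.coe_add] at h1
    exact_mod_cast h1
  have hcont : ContinuousAt H 0 := by
    have := (hHconv.continuousOn Metric.isOpen_ball).continuousAt
      (Metric.isOpen_ball.mem_nhds (Metric.mem_ball_self hε))
    exact this
  obtain ⟨δ, hδpos, hδ⟩ := Metric.continuousAt_iff.mp hcont 1 one_pos
  set δ' : ℝ := min δ (ε / 2) with hδ'def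
  have hδ'pos : 0 < δ' := lt_min hδpos (by linarith)
  set T0 : ℝ := H 0 + 1 with hT0def
  set N : Set (W × ℝ) := Metric.ball (0 : W) δ' ×ˢ Set.Ioi T0 with hNdef
  have hNopen : IsOpen N := IsOpen.prod Metric.isOpen_ball isOpen_Ioi
  have hNsub : N ⊆ epi := by
    rintro ⟨w, t⟩ ⟨hw, ht⟩
    have hwε : ‖w‖ < ε := by
      have : dist w 0 < δ' := hw
      rw [dist_zero_right] at this
      calc ‖w‖ < δ' := this
        _ ≤ ε / 2 := min_le_right _ _
        _ < ε := by linarith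
    have hwt : hwf w ≠ ⊤ := hball0 w hwε
    have hHw : H w < T0 := by
      have hd : dist w 0 < δ := lt_of_lt_of_le hw (min_le_left _ _)
      have := hδ hd
      rw [Real.dist_eq] at this
      have := abs_lt.mp this
      rw [hT0def]; linarith [this.1, this.2]
    have hwe : hwf w = ((H w : ℝ) : EReal) := (EReal.coe_toReal hwt (hwnb _)).symm
    show hwf w ≤ (t : EReal)
    rw [hwe]
    exact_mod_cast le_of_lt (lt_trans hHw (Set.mem_Ioi.mp ht))
  have hIntPt : ((0 : W), T0 + 1) ∈ interior epi :=
    interior_maximal hNsub hNopen (by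
      constructor
      · simpa [Metric.mem_ball] using hδ'pos
      · simp [hT0def])
  -- the affine set M
  set Sw : Submodule ℝ W := Submodule.comap W.subtype S with hSwdef
  set M : Set (W × ℝ) := {q | q.1 - p' ∈ Sw ∧ q.2 = m} with hMdef
  have hMconv : Convex ℝ M := by
    intro q hq r hr a b ha hb hab
    have hb' : b = 1 - a := by linarith
    subst hb'
    constructor
    · have : (a • q + (1-a) • r : W × ℝ).1 - p' = a • (q.1 - p') + (1-a) • (r.1 - p') := by
        show a • q.1 + (1-a) • r.1 - p' = _
        module
      rw [this]
      exact Submodule.add_mem _ (Submodule.smul_mem _ _ hq.1) (Submodule.smul_mem _ _ hr.1)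
    · show a * q.2 + (1-a) * r.2 = m
      rw [hq.2, hr.2]; ring
  have hdisj : Disjoint (interior epi) M := by
    rw [Set.disjoint_left]
    rintro q hqint ⟨hq1, hq2⟩
    obtain ⟨r, hrpos, hrball⟩ := Metric.isOpen_iff.mp isOpen_interior q hqint
    have hq' : (q.1, q.2 - r/2) ∈ epi := by
      apply interior_subset
      apply hrball
      rw [Metric.mem_ball, Prod.dist_eq]
      simp only [dist_self]
      rw [Real.dist_eq]
      have : |q.2 - r/2 - q.2| = r/2 := by rw [show q.2 - r/2 - q.2 = -(r/2) by ring, abs_neg,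
        abs_of_pos (by linarith)]
      rw [this]
      simp only [max_lt_iff]
      constructor <;> linarith
    -- but q.1 corresponds to a point of S, so hwf q.1 ≥ m
    have hSmem : sb + (q.1 : E) ∈ S := by
      have h1 : ((q.1 - p' : W) : E) ∈ S := hq1
      have h2 : sb + (q.1 : E) = p + ((q.1 - p' : W) : E) := by
        push_cast [hp'def]; abel
      rw [h2]
      exact Submodule.add_mem _ hpS h1
    have hge : (m : EReal) ≤ hwf q.1 := by rw [← hhp]; exact hmin _ hSmem
    have hle : hwf q.1 ≤ ((q.2 - r/2 : ℝ) : EReal) := hq'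
    rw [hq2] at hle
    have : (m : EReal) ≤ ((m - r/2 : ℝ) : EReal) := le_trans hge hle
    have : m ≤ m - r/2 := by exact_mod_cast this
    linarith
  -- separation
  obtain ⟨φ, u0, hφlt, hφge⟩ :=
    geometric_hahn_banach_open (hepiconv.interior) isOpen_interior hMconv hdisj
  set β : ℝ := φ (0, 1) with hβdef
  have hφdec : ∀ (w : W) (t : ℝ), φ (w, t) = φ (w, 0) + t * β := by
    intro w t
    have h : (w, t) = (w, (0:ℝ)) + t • ((0:W), (1:ℝ)) := by simp [Prod.ext_iff]
    rw [h, map_add, map_smul]; simp [smul_eq_mul, hβdef]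
  -- φ vanishes on Sw directions
  have hφSw : ∀ s ∈ Sw, φ ((s : W), 0) = 0 := by
    intro s hs
    by_contra hne
    -- for all λ, (p' + λ • s, m) ∈ M
    have hmem : ∀ lam : ℝ, (p' + lam • s, m) ∈ M := by
      intro lam
      refine ⟨?_, rfl⟩
      rw [show p' + lam • s - p' = lam • s by abel]
      exact Submodule.smul_mem _ _ hs
    have hineq : ∀ lam : ℝ, u0 ≤ φ (p', 0) + lam * φ (s, 0) + m * β := by
      intro lam
      have h1 := hφge _ (hmem lam)
      rw [hφdec] at h1
      have h2 : ((p' + lam • s : W), (0:ℝ)) = ((p' : W), (0:ℝ)) + lam • ((s : W), (0:ℝ)) := by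
        rw [Prod.smul_mk, Prod.mk_add_mk]
        norm_num
      rw [h2, map_add, map_smul, smul_eq_mul] at h1
      linarith
    have h1 := hineq ((u0 - φ (p', 0) - m * β - 1) / φ (s, 0))
    rw [div_mul_cancel₀ _ hne] at h1
    linarith
  -- β < 0
  have hβneg : β < 0 := by
    have hlt1 : ∀ t : ℝ, T0 < t → φ (0, t) < u0 := by
      intro t ht
      apply hφlt
      apply interior_maximal hNsub hNopen
      exact ⟨by simpa [Metric.mem_ball] using hδ'pos, ht⟩
    have hβle : β ≤ 0 := by
      by_contra hpos
      push_neg at hpos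
      have ht := hlt1 (max (T0 + 1) ((u0 + 1 - φ (0, 0)) / β)) (by
        apply lt_of_lt_of_le (by linarith) (le_max_left _ _))
      rw [hφdec] at ht
      have h2 : (u0 + 1 - φ (0,0)) / β * β = u0 + 1 - φ (0,0) := div_mul_cancel₀ _ (ne_of_gt hpos)
      have h3 : (u0 + 1 - φ (0,0)) / β ≤ max (T0 + 1) ((u0 + 1 - φ (0, 0)) / β) := le_max_right _ _
      have h4 := mul_le_mul_of_nonneg_right h3 (le_of_lt hpos)
      rw [h2] at h4
      linarith
    rcases lt_or_eq_of_le hβle with h | h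
    · exact h
    · exfalso
      -- β = 0 : contradiction via (0, m) ∈ M and (0, T0+1) ∈ interior epi
      have h0M : ((0 : W), m) ∈ M := by
        refine ⟨?_, rfl⟩
        show ((0 : W) - p' : W) ∈ Sw
        rw [zero_sub]
        show ((-p' : W) : E) ∈ S
        push_cast [hp'def]
        exact Submodule.neg_mem _ (Submodule.sub_mem _ hpS hsbS)
      have h1 := hφge _ h0M
      have h2 := hφlt _ hIntPt
      rw [hφdec] at h1 h2
      have hφ00 : φ ((0 : W), (0:ℝ)) = 0 := by
        have : ((0 : W), (0:ℝ)) = (0 : W × ℝ) := rfl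
        rw [this, map_zero]
      rw [hφ00, h] at h1 h2
      linarith
  set b : ℝ := -β with hbdef
  have hb : 0 < b := by simp [hbdef]; linarith
  have hβb : β = -b := by rw [hbdef]; ring
  -- φ ≤ u0 on all of epi
  have hepile : ∀ q ∈ epi, φ q ≤ u0 := by
    intro q hq
    by_contra hgt
    push_neg at hgt
    have hq0 : φ ((0:W), T0+1) < u0 := hφlt _ hIntPt
    have hd : 0 < φ q - φ ((0:W), T0+1) := by linarith
    set θ : ℝ := (φ q - u0) / (φ q - φ ((0:W), T0+1)) with hθdef
    have hθpos : 0 < θ := div_pos (by linarith) hd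
    have hθlt : θ < 1 := (div_lt_one hd).mpr (by linarith)
    have hmemseg : θ • ((0:W), T0+1) + (1-θ) • q ∈ interior epi := by
      apply Convex.openSegment_interior_self_subset_interior hepiconv hIntPt hq
      exact ⟨θ, 1-θ, hθpos, by linarith, by ring, rfl⟩
    have hval := hφlt _ hmemseg
    rw [map_add, map_smul, map_smul, smul_eq_mul, smul_eq_mul] at hval
    have h5 : θ * (φ q - φ ((0:W), T0+1)) = φ q - u0 := div_mul_cancel₀ _ (ne_of_gt hd)
    nlinarith [hval, h5]
  -- the linear functional as an inner product on W
  set ψ : W →L[ℝ] ℝ := (b⁻¹ : ℝ) • (φ.comp (ContinuousLinearMap.inl ℝ W ℝ)) with hψdef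
  set cW : W := (InnerProductSpace.toDual ℝ W).symm ψ with hcWdef
  have hcW : ∀ w : W, ⟪cW, w⟫ = b⁻¹ * φ (w, 0) := by
    intro w
    rw [hcWdef, InnerProductSpace.toDual_symm_apply]
    simp [hψdef]
  have hp'M : ((p' : W), m) ∈ M := by
    refine ⟨?_, rfl⟩
    rw [sub_self]
    exact Submodule.zero_mem Sw
  have h2 : u0 ≤ φ ((p' : W), 0) + m * β := by
    have := hφge _ hp'M
    rwa [hφdec] at this
  -- key real inequality on the domain of hwf
  have hineq : ∀ w : W, hwf w ≠ ⊤ → m + ⟪cW, w - p'⟫ ≤ (hwf w).toReal := by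
    intro w hwt
    set t : ℝ := (hwf w).toReal with htdef
    have hepi_w : (w, t) ∈ epi := by
      show hwf w ≤ ((t : ℝ) : EReal)
      rw [htdef, EReal.coe_toReal hwt (hwnb w)]
    have h1 : φ (w, t) ≤ u0 := hepile _ hepi_w
    rw [hφdec] at h1
    have hinner : ⟪cW, w - p'⟫ = b⁻¹ * (φ (w,0) - φ ((p':W),0)) := by
      rw [hcW (w - p')]
      have : ((w - p' : W), (0:ℝ)) = (w, (0:ℝ)) - ((p':W), (0:ℝ)) := by
        rw [Prod.mk_sub_mk]; norm_num
      rw [this, map_sub]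
    have h3 : φ (w,0) - φ ((p':W),0) ≤ m * β - t * β := by linarith
    have h4 : m * β - t * β = (t - m) * b := by rw [hβb]; ring
    have h6 : b⁻¹ * (φ (w,0) - φ ((p':W),0)) ≤ b⁻¹ * ((t - m) * b) := by
      apply mul_le_mul_of_nonneg_left _ (inv_nonneg.mpr hb.le)
      rw [← h4]; exact h3
    have h7 : b⁻¹ * ((t - m) * b) = t - m := by field_simp
    rw [hinner]
    linarith [h6, h7.symm ▸ h6]
  -- extend the Riesz vector orthogonally to all of S
  have hc₁W : (cW : E) ∈ W := cW.2
  have horthSW : ∀ x ∈ S ⊓ W, ⟪(cW : E), x⟫ = 0 := by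
    rintro x ⟨hxS, hxW⟩
    have hz : φ ((⟨x, hxW⟩ : W), 0) = 0 := hφSw ⟨x, hxW⟩ hxS
    have h8 : ⟪cW, (⟨x, hxW⟩ : W)⟫ = b⁻¹ * φ ((⟨x, hxW⟩ : W), 0) := hcW _
    rw [hz, mul_zero, Submodule.coe_inner] at h8
    exact h8
  obtain ⟨c, hcS, hcWagree⟩ := extend_orth S W (cW : E) hc₁W horthSW
  refine ⟨c, hcS, ?_⟩
  intro z
  by_cases hz : h z = ⊤
  · rw [hz]; exact le_top
  · have hzD : z ∈ D := hz
    have hzW : z - sb ∈ W := hmemW z hzD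
    set wz : W := ⟨z - sb, hzW⟩ with hwzdef
    have hhz : hwf wz = h z := by
      show h (sb + (z - sb)) = h z
      rw [show sb + (z - sb) = z by abel]
    have hwt : hwf wz ≠ ⊤ := by rw [hhz]; exact hz
    have hkey := hineq wz hwt
    have hzpW : z - p ∈ W := by
      have := Submodule.sub_mem W hzW hpW
      rwa [show (z - sb) - (p - sb) = z - p by abel] at this
    have hc1 : ⟪cW, wz - p'⟫ = ⟪c, z - p⟫ := by
      rw [Submodule.coe_inner]
      have hcoe : ((wz - p' : W) : E) = z - p := by
        push_cast [hwzdef, hp'def]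
        abel
      rw [hcoe, ← hcWagree (z - p) hzpW]
    rw [hhp]
    have hze : h z = (((hwf wz).toReal : ℝ) : EReal) := by
      rw [← hhz, EReal.coe_toReal hwt (hwnb _)]
    rw [hze, ← EReal.coe_add]
    apply EReal.coe_le_coe_iff.mpr
    rw [← hc1]
    exact hkey


variable {n : ℕ}

lemma ereal_mul_ne_bot (t : ℝ) (ht : 0 < t) (a : EReal) (ha : a ≠ ⊥) : (t:EReal) * a ≠ ⊥ := by
  induction a using EReal.rec with
  | bot => exact absurd rfl ha
  | coe r => rw [← EReal.coe_mul]; exact EReal.coe_ne_bot _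
  | top => rw [EReal.coe_mul_top_of_pos ht]; exact top_ne_bot

lemma fc_ne_bot (f : EuclideanSpace ℝ (Fin n) → EReal) (x₀ : EuclideanSpace ℝ (Fin n))
    (hx₀ : f x₀ ≠ ⊤) (hb : f x₀ ≠ ⊥) (y : EuclideanSpace ℝ (Fin n)) :
    fenchelConj f y ≠ ⊥ := by
  have h1 : ((⟪y, x₀⟫ : ℝ) : EReal) - f x₀ ≤ fenchelConj f y := by
    rw [fenchelConj]; exact le_iSup (fun x => ((⟪y, x⟫ : ℝ) : EReal) - f x) x₀
  have h2 : f x₀ = ((f x₀).toReal : EReal) := (EReal.coe_toReal hx₀ hb).symm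
  rw [h2] at h1
  rw [← EReal.coe_sub] at h1
  intro hbot
  rw [hbot] at h1
  exact (EReal.coe_ne_bot _) (le_bot_iff.mp h1)

/-- Fenchel-Young in real form: if `f x` is finite, then `⟪y,x⟫ - f x ≤ f* y`. -/
lemma fc_young (f : EuclideanSpace ℝ (Fin n) → EReal) (y x : EuclideanSpace ℝ (Fin n)) :
    ((⟪y, x⟫ : ℝ) : EReal) - f x ≤ fenchelConj f y := by
  rw [fenchelConj]; exact le_iSup (fun x => ((⟪y, x⟫ : ℝ) : EReal) - f x) x

lemma fc_convex (f : EuclideanSpace ℝ (Fin n) → EReal) (x₀ : EuclideanSpace ℝ (Fin n))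
    (hx₀ : f x₀ ≠ ⊤) (hb : f x₀ ≠ ⊥) (hnobot : ∀ x, f x ≠ ⊥) :
    ∀ (x y : EuclideanSpace ℝ (Fin n)) (t : ℝ), 0 ≤ t → t ≤ 1 →
      fenchelConj f (t • x + (1 - t) • y) ≤
        (t : EReal) * fenchelConj f x + ((1 - t : ℝ) : EReal) * fenchelConj f y := by
  intro x y t h0 h1
  rcases eq_or_lt_of_le h0 with h0' | h0'
  · rw [← h0']
    norm_num
  rcases eq_or_lt_of_le h1 with h1' | h1'
  · rw [h1']
    norm_num
  apply iSup_le
  intro z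
  by_cases hz : f z = ⊤
  · rw [hz]
    simp
  · have hze : f z = ((f z).toReal : EReal) := (EReal.coe_toReal hz (hnobot z)).symm
    set s : ℝ := (f z).toReal with hsdef
    have hin : ⟪t • x + (1-t) • y, z⟫ = t * ⟪x, z⟫ + (1-t) * ⟪y, z⟫ := by
      rw [inner_add_left, real_inner_smul_left, real_inner_smul_left]
    rw [hze, hin, ← EReal.coe_sub]
    have hterm : (t * ⟪x,z⟫ + (1-t) * ⟪y,z⟫ - s : ℝ) = t * (⟪x,z⟫ - s) + (1-t) * (⟪y,z⟫ - s) := by ring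
    rw [hterm]
    have hx' : ((⟪x,z⟫ - s : ℝ) : EReal) ≤ fenchelConj f x := by
      have := fc_young f x z; rwa [hze, ← EReal.coe_sub] at this
    have hy' : ((⟪y,z⟫ - s : ℝ) : EReal) ≤ fenchelConj f y := by
      have := fc_young f y z; rwa [hze, ← EReal.coe_sub] at this
    by_cases hfx : fenchelConj f x = ⊤
    · rw [hfx]
      rw [EReal.coe_mul_top_of_pos h0']
      rw [EReal.top_add_of_ne_bot]
      · exact le_top
      · exact ereal_mul_ne_bot (1-t) (by linarith) _ (fc_ne_bot f x₀ hx₀ hb y)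
    · by_cases hfy : fenchelConj f y = ⊤
      · rw [hfy, EReal.coe_mul_top_of_pos (by linarith : (0:ℝ) < 1 - t)]
        rw [EReal.add_top_of_ne_bot]
        · exact le_top
        · exact ereal_mul_ne_bot t h0' _ (fc_ne_bot f x₀ hx₀ hb x)
      · have hxe : fenchelConj f x = ((fenchelConj f x).toReal : EReal) :=
          (EReal.coe_toReal hfx (fc_ne_bot f x₀ hx₀ hb x)).symm
        have hye : fenchelConj f y = ((fenchelConj f y).toReal : EReal) :=
          (EReal.coe_toReal hfy (fc_ne_bot f x₀ hx₀ hb y)).symm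
        rw [hxe] at hx' ⊢
        rw [hye] at hy' ⊢
        rw [← EReal.coe_mul, ← EReal.coe_mul, ← EReal.coe_add]
        have hx2 : (⟪x,z⟫ - s : ℝ) ≤ (fenchelConj f x).toReal := by exact_mod_cast hx'
        have hy2 : (⟪y,z⟫ - s : ℝ) ≤ (fenchelConj f y).toReal := by exact_mod_cast hy'
        apply EReal.coe_le_coe_iff.mpr
        have := mul_le_mul_of_nonneg_left hx2 h0
        have := mul_le_mul_of_nonneg_left hy2 (by linarith : (0:ℝ) ≤ 1 - t)
        nlinarith

set_option maxHeartbeats 1000000 in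
lemma biconj_ge (f : EuclideanSpace ℝ (Fin n) → EReal)
    (hproper : ∃ x, f x ≠ ⊤) (hnobot : ∀ x, f x ≠ ⊥)
    (hconv : ∀ x y : EuclideanSpace ℝ (Fin n), ∀ t : ℝ, 0 ≤ t → t ≤ 1 →
      f (t • x + (1 - t) • y) ≤ (t : EReal) * f x + ((1 - t : ℝ) : EReal) * f y)
    (hlsc : LowerSemicontinuous f)
    (sb : EuclideanSpace ℝ (Fin n)) (hsb : fenchelConj f sb ≠ ⊤)
    (x : EuclideanSpace ℝ (Fin n)) : f x ≤ fenchelConj (fenchelConj f) x := by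
  classical
  obtain ⟨x₀, hx₀⟩ := hproper
  -- the affine minorant from sb
  set m0 : ℝ := (fenchelConj f sb).toReal with hm0def
  have hsbb : fenchelConj f sb ≠ ⊥ := fc_ne_bot f x₀ hx₀ (hnobot x₀) sb
  have hsbe : fenchelConj f sb = (m0 : EReal) := (EReal.coe_toReal hsb hsbb).symm
  have hminor : ∀ z : EuclideanSpace ℝ (Fin n), f z ≠ ⊤ → ⟪sb, z⟫ - m0 ≤ (f z).toReal := by
    intro z hz
    have h1 := fc_young f sb z
    rw [hsbe, (EReal.coe_toReal hz (hnobot z)).symm, ← EReal.coe_sub] at h1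
    have h2 : (⟪sb,z⟫ - (f z).toReal : ℝ) ≤ m0 := by exact_mod_cast h1
    linarith
  -- main claim: every real r < f x is beaten by an affine minorant
  have hclaim : ∀ r : ℝ, (r : EReal) < f x →
      ∃ (s : EuclideanSpace ℝ (Fin n)) (k : ℝ), (∀ z : EuclideanSpace ℝ (Fin n), ((⟪s,z⟫ + k : ℝ) : EReal) ≤ f z) ∧ r < ⟪s,x⟫ + k := by
    intro r hr
    set epi : Set (EuclideanSpace ℝ (Fin n) × ℝ) := {q | f q.1 ≤ (q.2 : EReal)} with hepidef
    have hepiconv : Convex ℝ epi := by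
      intro q hq w hw a b ha hb hab
      have hb' : b = 1 - a := by linarith
      subst hb'
      have hq' : f q.1 ≤ (q.2 : EReal) := hq
      have hw' : f w.1 ≤ (w.2 : EReal) := hw
      have hqt : f q.1 ≠ ⊤ := ne_top_of_le_ne_top (EReal.coe_ne_top _) hq'
      have hwt : f w.1 ≠ ⊤ := ne_top_of_le_ne_top (EReal.coe_ne_top _) hw'
      have hqe : f q.1 = ((f q.1).toReal : EReal) := (EReal.coe_toReal hqt (hnobot _)).symm
      have hwe : f w.1 = ((f w.1).toReal : EReal) := (EReal.coe_toReal hwt (hnobot _)).symm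
      have hq2 : (f q.1).toReal ≤ q.2 := by rw [hqe] at hq'; exact_mod_cast hq'
      have hw2 : (f w.1).toReal ≤ w.2 := by rw [hwe] at hw'; exact_mod_cast hw'
      show f (a • q.1 + (1-a) • w.1) ≤ (((a • q + (1-a) • w : EuclideanSpace ℝ (Fin n) × ℝ).2 : ℝ) : EReal)
      refine le_trans (hconv q.1 w.1 a ha (by linarith)) ?_
      rw [hqe, hwe, ← EReal.coe_mul, ← EReal.coe_mul, ← EReal.coe_add]
      have : (a • q + (1-a) • w : EuclideanSpace ℝ (Fin n) × ℝ).2 = a * q.2 + (1-a) * w.2 := rfl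
      rw [this]
      apply EReal.coe_le_coe_iff.mpr
      have := mul_le_mul_of_nonneg_left hq2 ha
      have := mul_le_mul_of_nonneg_left hw2 hb
      nlinarith
    have hepiclosed : IsClosed epi := by
      rw [← isOpen_compl_iff]
      rw [isOpen_iff_mem_nhds]
      rintro ⟨z, t⟩ hq
      have hq' : (t : EReal) < f z := by
        simp only [Set.mem_compl_iff, hepidef, Set.mem_setOf_eq, not_le] at hq
        exact hq
      obtain ⟨t', ht1, ht2⟩ := EReal.exists_between_coe_real hq'
      have ht1' : t < t' := by exact_mod_cast ht1
      have hev : ∀ᶠ z' in nhds z, (t' : EReal) < f z' := hlsc z (t' : EReal) ht2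
      obtain ⟨U, hUsub, hUopen, hzU⟩ := eventually_nhds_iff.mp hev
      apply Filter.mem_of_superset
        (prod_mem_nhds (hUopen.mem_nhds hzU) (Iio_mem_nhds ht1'))
      rintro ⟨z', s'⟩ ⟨hz', hs'⟩
      simp only [Set.mem_compl_iff, hepidef, Set.mem_setOf_eq, not_le]
      have h3 : (s' : EReal) < (t' : EReal) := by exact_mod_cast hs'
      exact lt_trans h3 (hUsub z' hz')
    have hxr : (x, r) ∉ epi := by
      intro hmem
      exact absurd (lt_of_lt_of_le hr hmem) (lt_irrefl _)
    obtain ⟨φ, u0, hu1, hu2⟩ :=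
      geometric_hahn_banach_point_closed hepiconv hepiclosed hxr
    set β : ℝ := φ (0, 1) with hβdef
    have hφdec : ∀ (w : EuclideanSpace ℝ (Fin n)) (t : ℝ), φ (w, t) = φ (w, 0) + t * β := by
      intro w t
      have h : (w, t) = (w, (0:ℝ)) + t • ((0:EuclideanSpace ℝ (Fin n)), (1:ℝ)) := by simp [Prod.ext_iff]
      rw [h, map_add, map_smul]; simp [smul_eq_mul, hβdef]
    have hx0e : f x₀ = ((f x₀).toReal : EReal) := (EReal.coe_toReal hx₀ (hnobot x₀)).symm
    have hepimem : ∀ (z : EuclideanSpace ℝ (Fin n)) (t : ℝ), f z ≠ ⊤ → (f z).toReal ≤ t → (z, t) ∈ epi := by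
      intro z t hz ht
      show f z ≤ (t : EReal)
      rw [(EReal.coe_toReal hz (hnobot z)).symm]
      exact_mod_cast ht
    -- β ≥ 0
    have hβnonneg : 0 ≤ β := by
      by_contra hneg
      push_neg at hneg
      set t : ℝ := max (f x₀).toReal ((φ (x₀, 0) - u0) / (-β) + 1) with htdef
      have hmem : (x₀, t) ∈ epi := hepimem x₀ t hx₀ (le_max_left _ _)
      have h4 := hu2 _ hmem
      rw [hφdec] at h4
      have h5 : (φ (x₀, 0) - u0) / (-β) + 1 ≤ t := le_max_right _ _
      have h6 : (φ (x₀, 0) - u0) / (-β) * (-β) = φ (x₀, 0) - u0 := div_mul_cancel₀ _ (by linarith)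
      nlinarith
    set s₁ : EuclideanSpace ℝ (Fin n) := (InnerProductSpace.toDual ℝ (EuclideanSpace ℝ (Fin n))).symm (φ.comp (ContinuousLinearMap.inl ℝ (EuclideanSpace ℝ (Fin n)) ℝ))
    have hs₁ : ∀ w : EuclideanSpace ℝ (Fin n), ⟪s₁, w⟫ = φ (w, 0) := by
      intro w
      rw [InnerProductSpace.toDual_symm_apply]
      simp
    rcases eq_or_lt_of_le hβnonneg with hβ0 | hβpos
    · -- vertical case: tilt the minorant from sb
      have hβ0' : β = 0 := hβ0.symm
      have hdom : ∀ z, f z ≠ ⊤ → u0 < φ (z, 0) := by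
        intro z hz
        have h4 := hu2 _ (hepimem z _ hz (le_refl _))
        rw [hφdec, hβ0', mul_zero, add_zero] at h4
        exact h4
      have hx' : φ (x, 0) < u0 := by
        have h4 := hu1
        rw [hφdec, hβ0', mul_zero, add_zero] at h4
        exact h4
      have hd : 0 < u0 - φ (x,0) := by linarith
      set lam : ℝ := max 0 ((r + m0 + 1 - ⟪sb,x⟫) / (u0 - φ (x,0))) with hlamdef
      have hlam0 : 0 ≤ lam := le_max_left _ _
      refine ⟨sb - lam • s₁, -m0 + lam * u0, ?_, ?_⟩
      · intro z
        by_cases hz : f z = ⊤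
        · rw [hz]; exact le_top
        · rw [(EReal.coe_toReal hz (hnobot z)).symm]
          apply EReal.coe_le_coe_iff.mpr
          rw [inner_sub_left, real_inner_smul_left, hs₁]
          have h5 := hminor z hz
          have h7 : 0 ≤ lam * (φ (z,0) - u0) :=
            mul_nonneg hlam0 (by linarith [hdom z hz])
          rw [mul_sub] at h7
          linarith
      · have h9 : (r + m0 + 1 - ⟪sb,x⟫) / (u0 - φ (x,0)) ≤ lam := le_max_right _ _
        have h10 := mul_le_mul_of_nonneg_right h9 (le_of_lt hd)
        rw [div_mul_cancel₀ _ (ne_of_gt hd)] at h10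
        rw [mul_sub] at h10
        rw [inner_sub_left, real_inner_smul_left, hs₁]
        linarith
    · -- β > 0 case
      refine ⟨-(β⁻¹) • s₁, u0 / β, ?_, ?_⟩
      · intro z
        by_cases hz : f z = ⊤
        · rw [hz]; exact le_top
        · have hmem : (z, (f z).toReal) ∈ epi := hepimem z _ hz (le_refl _)
          have h4 := hu2 _ hmem
          rw [hφdec] at h4
          rw [(EReal.coe_toReal hz (hnobot z)).symm]
          apply EReal.coe_le_coe_iff.mpr
          rw [real_inner_smul_left, hs₁]
          have h5 : u0 < φ (z, 0) + (f z).toReal * β := h4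
          have h6 : (u0 - φ (z,0)) / β < (f z).toReal := by
            rw [div_lt_iff₀ hβpos]
            linarith
          have h7 : -β⁻¹ * φ (z,0) + u0 / β = (u0 - φ (z,0))/β := by
            field_simp
            ring
          linarith [h6, h7.symm.le]
      · have h4 : φ (x, r) < u0 := hu1
        rw [hφdec] at h4
        rw [real_inner_smul_left, hs₁]
        have h6 : r < (u0 - φ (x,0)) / β := by
          rw [lt_div_iff₀ hβpos]
          linarith
        have h7 : -β⁻¹ * φ (x,0) + u0 / β = (u0 - φ (x,0))/β := by
          field_simp
          ring
        linarith [h6, h7.symm.le]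
  by_contra hlt
  push_neg at hlt
  obtain ⟨r, hr1, hr2⟩ := EReal.exists_between_coe_real hlt
  obtain ⟨sB, k, hmin', hrx⟩ := hclaim r hr2
  have hfs : fenchelConj f sB ≤ ((-k : ℝ) : EReal) := by
    rw [fenchelConj]
    apply iSup_le
    intro z
    by_cases hz : f z = ⊤
    · rw [hz]
      simp
    · rw [(EReal.coe_toReal hz (hnobot z)).symm, ← EReal.coe_sub]
      apply EReal.coe_le_coe_iff.mpr
      have h5 := hmin' z
      rw [(EReal.coe_toReal hz (hnobot z)).symm] at h5
      have h6 : (⟪sB,z⟫ + k : ℝ) ≤ (f z).toReal := by exact_mod_cast h5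
      linarith
  have hfsb : fenchelConj f sB ≠ ⊥ := fc_ne_bot f x₀ hx₀ (hnobot x₀) sB
  have hfst : fenchelConj f sB ≠ ⊤ := ne_top_of_le_ne_top (EReal.coe_ne_top _) hfs
  set ms : ℝ := (fenchelConj f sB).toReal with hmsdef
  have hmsle : ms ≤ -k := by
    have := hfs
    rw [(EReal.coe_toReal hfst hfsb).symm] at this
    exact_mod_cast this
  have h7 : ((⟪x, sB⟫ : ℝ) : EReal) - fenchelConj f sB ≤ fenchelConj (fenchelConj f) x :=
    fc_young (fenchelConj f) x sB
  rw [(EReal.coe_toReal hfst hfsb).symm, ← EReal.coe_sub] at h7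
  have h8 : (r : EReal) < ((⟪x,sB⟫ - ms : ℝ) : EReal) := by
    apply EReal.coe_lt_coe_iff.mpr
    rw [real_inner_comm]
    linarith
  exact absurd (lt_of_lt_of_le (lt_trans hr1 h8) h7) (lt_irrefl _)

lemma biconj_le (f : EuclideanSpace ℝ (Fin n) → EReal)
    (hproper : ∃ x, f x ≠ ⊤) (hnobot : ∀ x, f x ≠ ⊥) (x : EuclideanSpace ℝ (Fin n)) :
    fenchelConj (fenchelConj f) x ≤ f x := by
  obtain ⟨x₀, hx₀⟩ := hproper
  rw [fenchelConj]
  apply iSup_le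
  intro z
  by_cases hfx : f x = ⊤
  · rw [hfx]; exact le_top
  · have hfz : fenchelConj f z ≠ ⊥ := fc_ne_bot f x₀ hx₀ (hnobot x₀) z
    by_cases hfzt : fenchelConj f z = ⊤
    · rw [hfzt]
      simp
    · have h1 := fc_young f z x
      rw [(EReal.coe_toReal hfx (hnobot x)).symm, ← EReal.coe_sub] at h1
      rw [(EReal.coe_toReal hfzt hfz).symm] at h1 ⊢
      rw [← EReal.coe_sub]
      rw [(EReal.coe_toReal hfx (hnobot x)).symm]
      apply EReal.coe_le_coe_iff.mpr
      have h2 : (⟪z,x⟫ - (f x).toReal : ℝ) ≤ (fenchelConj f z).toReal := by exact_mod_cast h1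
      rw [real_inner_comm] at h2
      linarith

lemma nonneg_of_forall_small (a C : ℝ) (h : ∀ t : ℝ, 0 < t → t ≤ 1 → -(t*C) ≤ a) : 0 ≤ a := by
  by_contra hneg
  push_neg at hneg
  rcases le_or_gt C 0 with hC | hC
  · have := h 1 one_pos le_rfl
    nlinarith
  · set t : ℝ := min 1 ((-a)/(2*C)) with htdef
    have ht0 : 0 < t := lt_min one_pos (div_pos (by linarith) (by linarith))
    have ht1 : t ≤ 1 := min_le_left _ _
    have h2 := h t ht0 ht1
    have h3 : t ≤ (-a)/(2*C) := min_le_right _ _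
    have h4 := mul_le_mul_of_nonneg_right h3 hC.le
    rw [div_mul_eq_mul_div, mul_div_assoc] at h4
    have h5 : C / (2*C) = 1/2 := by field_simp
    rw [h5] at h4
    nlinarith

set_option maxHeartbeats 1000000 in
lemma prox_reverse {n m : ℕ}
    (f : EuclideanSpace ℝ (Fin n) → EReal)
    (hproper : ∃ x, f x ≠ ⊤) (hnobot : ∀ x, f x ≠ ⊥)
    (hconv : ∀ x y : EuclideanSpace ℝ (Fin n), ∀ t : ℝ, 0 ≤ t → t ≤ 1 →
      f (t • x + (1 - t) • y) ≤ (t : EReal) * f x + ((1 - t : ℝ) : EReal) * f y)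
    (A : EuclideanSpace ℝ (Fin n) →L[ℝ] EuclideanSpace ℝ (Fin m))
    (g : EuclideanSpace ℝ (Fin m) → EReal)
    (hg : ∀ u, g u = fenchelConj f ((ContinuousLinearMap.adjoint A) u))
    (α : ℝ) (hα : 0 < α) (u v : EuclideanSpace ℝ (Fin m))
    (x : EuclideanSpace ℝ (Fin n))
    (hxmin : ∀ y, f x - ((⟪u, A x⟫ : ℝ) : EReal) + ((α / 2 * ‖A x‖ ^ 2 : ℝ) : EReal) ≤
            f y - ((⟪u, A y⟫ : ℝ) : EReal) + ((α / 2 * ‖A y‖ ^ 2 : ℝ) : EReal))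
    (hveq : v = u - α • A x) :
    ∀ w, g v + ((1 / (2 * α) * ‖v - u‖ ^ 2 : ℝ) : EReal) ≤
        g w + ((1 / (2 * α) * ‖w - u‖ ^ 2 : ℝ) : EReal) := by
  obtain ⟨x₀, hx₀⟩ := hproper
  have hx₀e : f x₀ = ((f x₀).toReal : EReal) := (EReal.coe_toReal hx₀ (hnobot x₀)).symm
  -- f x is finite
  have hfxt : f x ≠ ⊤ := by
    intro htop
    have h1 := hxmin x₀
    rw [htop, hx₀e, ← EReal.coe_sub, ← EReal.coe_add, EReal.top_sub_coe, EReal.top_add_coe] at h1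
    exact (EReal.coe_ne_top _) (top_le_iff.mp h1)
  set a : ℝ := (f x).toReal with hadef
  have hfxe : f x = (a : EReal) := (EReal.coe_toReal hfxt (hnobot x)).symm
  -- subgradient inequality
  have hsub : ∀ z, f z ≠ ⊤ →
      a + ⟪(ContinuousLinearMap.adjoint A) v, z - x⟫ ≤ (f z).toReal := by
    intro z hz
    set b : ℝ := (f z).toReal with hbdef
    have hfze : f z = (b : EReal) := (EReal.coe_toReal hz (hnobot z)).symm
    set d : EuclideanSpace ℝ (Fin m) := A z - A x with hddef
    have hkey : ∀ t : ℝ, 0 < t → t ≤ 1 →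
        -(t * (α/2 * ⟪d, d⟫)) ≤ b - a - ⟪u, d⟫ + α * ⟪A x, d⟫ := by
      intro t ht0 ht1
      set y : EuclideanSpace ℝ (Fin n) := t • z + (1 - t) • x with hydef
      have hAy : A y = A x + t • d := by
        rw [hydef, map_add, map_smul, map_smul, hddef]
        module
      have hfy_le : f y ≤ ((t * b + (1-t) * a : ℝ) : EReal) := by
        refine le_trans (hconv z x t ht0.le ht1) ?_
        rw [hfze, hfxe, ← EReal.coe_mul, ← EReal.coe_mul, ← EReal.coe_add]
      have hfyt : f y ≠ ⊤ := ne_top_of_le_ne_top (EReal.coe_ne_top _) hfy_le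
      set c : ℝ := (f y).toReal with hcdef
      have hfye : f y = (c : EReal) := (EReal.coe_toReal hfyt (hnobot y)).symm
      have hcle : c ≤ t * b + (1-t) * a := by
        rw [hfye] at hfy_le; exact_mod_cast hfy_le
      have h1 := hxmin y
      rw [hfxe, hfye, ← EReal.coe_sub, ← EReal.coe_sub, ← EReal.coe_add, ← EReal.coe_add] at h1
      have h2 : a - ⟪u, A x⟫ + α/2 * ‖A x‖^2 ≤ c - ⟪u, A y⟫ + α/2 * ‖A y‖^2 := by
        exact_mod_cast h1
      have hiu : ⟪u, A y⟫ = ⟪u, A x⟫ + t * ⟪u, d⟫ := by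
        rw [hAy, inner_add_right, real_inner_smul_right]
      have hny : ‖A y‖^2 = ‖A x‖^2 + 2 * t * ⟪A x, d⟫ + t^2 * ⟪d, d⟫ := by
        rw [hAy, ← real_inner_self_eq_norm_sq, ← real_inner_self_eq_norm_sq]
        rw [inner_add_right, inner_add_left, inner_add_left, real_inner_smul_left,
          real_inner_smul_left, real_inner_smul_right, real_inner_smul_right]
        rw [real_inner_comm d (A x)]
        ring
      rw [hiu, hny] at h2
      -- h2 : a - ⟪u,Ax⟫ + α/2‖Ax‖² ≤ c - ⟪u,Ax⟫ - t⟪u,d⟫ + α/2(‖Ax‖² + 2t⟪Ax,d⟫ + t²⟪d,d⟫)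
      have h3 : 0 ≤ t * (b - a - ⟪u, d⟫ + α * ⟪A x, d⟫ + t * (α/2 * ⟪d,d⟫)) := by nlinarith
      have h4 : 0 ≤ b - a - ⟪u, d⟫ + α * ⟪A x, d⟫ + t * (α/2 * ⟪d,d⟫) :=
        nonneg_of_mul_nonneg_right h3 ht0
      linarith
    have h5 : 0 ≤ b - a - ⟪u, d⟫ + α * ⟪A x, d⟫ :=
      nonneg_of_forall_small _ _ (fun t ht0 ht1 => hkey t ht0 ht1)
    have h6 : ⟪(ContinuousLinearMap.adjoint A) v, z - x⟫ = ⟪v, d⟫ := by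
      rw [ContinuousLinearMap.adjoint_inner_left, map_sub, hddef]
    have h7 : ⟪v, d⟫ = ⟪u, d⟫ - α * ⟪A x, d⟫ := by
      rw [hveq, inner_sub_left, real_inner_smul_left]
    rw [h6, h7]
    linarith
  -- conjugate value at Aᵀ v
  have hgv : g v = ((⟪v, A x⟫ - a : ℝ) : EReal) := by
    rw [hg v]
    apply le_antisymm
    · rw [fenchelConj]
      apply iSup_le
      intro z
      by_cases hz : f z = ⊤
      · rw [hz]; simp
      · rw [(EReal.coe_toReal hz (hnobot z)).symm, ← EReal.coe_sub]
        apply EReal.coe_le_coe_iff.mpr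
        have h8 := hsub z hz
        have h9 : ⟪(ContinuousLinearMap.adjoint A) v, z - x⟫
            = ⟪(ContinuousLinearMap.adjoint A) v, z⟫ - ⟪v, A x⟫ := by
          simp only [inner_sub_right, ContinuousLinearMap.adjoint_inner_left]
        linarith [h8, h9.symm.le]
    · have h10 := fc_young f ((ContinuousLinearMap.adjoint A) v) x
      rw [hfxe, ← EReal.coe_sub, ContinuousLinearMap.adjoint_inner_left] at h10
      exact h10
  -- final computation
  intro w
  by_cases hgw : g w = ⊤
  · rw [hgw, EReal.top_add_coe]; exact le_top
  · have hgwb : g w ≠ ⊥ := by rw [hg w]; exact fc_ne_bot f x₀ hx₀ (hnobot x₀) _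
    have hgwe : g w = ((g w).toReal : EReal) := (EReal.coe_toReal hgw hgwb).symm
    set gw : ℝ := (g w).toReal with hgwdef
    have hgwge : ⟪w, A x⟫ - a ≤ gw := by
      have h11 := fc_young f ((ContinuousLinearMap.adjoint A) w) x
      rw [hfxe, ← EReal.coe_sub, ContinuousLinearMap.adjoint_inner_left, ← hg w, hgwe] at h11
      exact_mod_cast h11
    rw [hgv, hgwe, ← EReal.coe_add, ← EReal.coe_add]
    apply EReal.coe_le_coe_iff.mpr
    -- pure real inequality now
    have hvu : v - u = -(α • A x) := by rw [hveq]; abel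
    have hnvu : ‖v - u‖^2 = α^2 * ‖A x‖^2 := by
      rw [hvu, norm_neg, norm_smul]
      simp [Real.norm_eq_abs, abs_of_pos hα, mul_pow]
    have hvAx : ⟪v, A x⟫ = ⟪u, A x⟫ - α * ‖A x‖^2 := by
      rw [hveq, inner_sub_left, real_inner_smul_left, real_inner_self_eq_norm_sq]
    have hexp : 0 ≤ ‖(w - u) + α • A x‖^2 := sq_nonneg _
    have hexp2 : ‖(w - u) + α • A x‖^2
        = ‖w - u‖^2 + 2 * α * ⟪w - u, A x⟫ + α^2 * ‖A x‖^2 := by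
      rw [← real_inner_self_eq_norm_sq, ← real_inner_self_eq_norm_sq (w-u),
        ← real_inner_self_eq_norm_sq (A x)]
      rw [inner_add_right, inner_add_left, inner_add_left, real_inner_smul_left,
        real_inner_smul_left, real_inner_smul_right, real_inner_smul_right]
      rw [real_inner_comm (A x) (w - u)]
      ring
    have hwAx : ⟪w, A x⟫ = ⟪w - u, A x⟫ + ⟪u, A x⟫ := by
      rw [inner_sub_left]; ring
    have h2α : (0:ℝ) < 2 * α := by linarith
    have hgoal2 : 0 ≤ 2 * α * ((gw + 1/(2*α) * ‖w-u‖^2) - ((⟪v, A x⟫ - a) + 1/(2*α) * ‖v-u‖^2)) := by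
      have hc1 : 2 * α * (1/(2*α) * ‖w-u‖^2) = ‖w-u‖^2 := by field_simp
      have hc2 : 2 * α * (1/(2*α) * ‖v-u‖^2) = ‖v-u‖^2 := by field_simp
      nlinarith [hgwge, hexp, hexp2, hnvu, hvAx, hwAx, hc1, hc2]
    have := nonneg_of_mul_nonneg_right hgoal2 h2α
    linarith

lemma ereal_sub_coe_ne_bot {a : EReal} (ha : a ≠ ⊥) (r : ℝ) : a - (r : EReal) ≠ ⊥ := by
  induction a using EReal.rec with
  | bot => exact absurd rfl ha
  | coe s => rw [← EReal.coe_sub]; exact EReal.coe_ne_bot _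
  | top => rw [EReal.top_sub_coe]; exact top_ne_bot

lemma ereal_sub_coe_eq_top_iff {a : EReal} (ha : a ≠ ⊥) (r : ℝ) : a - (r : EReal) = ⊤ ↔ a = ⊤ := by
  induction a using EReal.rec with
  | bot => exact absurd rfl ha
  | coe s =>
      rw [← EReal.coe_sub]
      constructor
      · intro hcon; exact absurd hcon (EReal.coe_ne_top _)
      · intro hcon; exact absurd hcon (EReal.coe_ne_top _)
  | top => rw [EReal.top_sub_coe]

set_option maxHeartbeats 2000000 in
lemma prox_forward {n m : ℕ}
    (f : EuclideanSpace ℝ (Fin n) → EReal)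
    (hproper : ∃ x, f x ≠ ⊤) (hnobot : ∀ x, f x ≠ ⊥)
    (hconv : ∀ x y : EuclideanSpace ℝ (Fin n), ∀ t : ℝ, 0 ≤ t → t ≤ 1 →
      f (t • x + (1 - t) • y) ≤ (t : EReal) * f x + ((1 - t : ℝ) : EReal) * f y)
    (hlsc : LowerSemicontinuous f)
    (A : EuclideanSpace ℝ (Fin n) →L[ℝ] EuclideanSpace ℝ (Fin m))
    (g : EuclideanSpace ℝ (Fin m) → EReal)
    (hg : ∀ u, g u = fenchelConj f ((ContinuousLinearMap.adjoint A) u))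
    (hri : (intrinsicInterior ℝ {x | fenchelConj f x ≠ ⊤} ∩
      Set.range (ContinuousLinearMap.adjoint A)).Nonempty)
    (α : ℝ) (hα : 0 < α) (u v : EuclideanSpace ℝ (Fin m))
    (hprox : ∀ w, g v + ((1 / (2 * α) * ‖v - u‖ ^ 2 : ℝ) : EReal) ≤
        g w + ((1 / (2 * α) * ‖w - u‖ ^ 2 : ℝ) : EReal)) :
    ∃ x : EuclideanSpace ℝ (Fin n),
      (∀ y, f x - ((⟪u, A x⟫ : ℝ) : EReal) + ((α / 2 * ‖A x‖ ^ 2 : ℝ) : EReal) ≤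
            f y - ((⟪u, A y⟫ : ℝ) : EReal) + ((α / 2 * ‖A y‖ ^ 2 : ℝ) : EReal)) ∧
      v = u - α • A x := by
  classical
  obtain ⟨x₀, hx₀⟩ := hproper
  obtain ⟨sb, hsbri, hsbrange⟩ := hri
  obtain ⟨ub, hub⟩ := hsbrange
  set T := ContinuousLinearMap.adjoint A with hTdef
  set F := fenchelConj f with hFdef
  have hFnb : ∀ y, F y ≠ ⊥ := fun y => fc_ne_bot f x₀ hx₀ (hnobot x₀) y
  have hsbt : F sb ≠ ⊤ := intrinsicInterior_subset hsbri
  have hgub : g ub ≠ ⊤ := by rw [hg ub, hub]; exact hsbt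
  have hgnb : ∀ w, g w ≠ ⊥ := fun w => by rw [hg w]; exact hFnb _
  -- g v is finite
  have hgvt : g v ≠ ⊤ := by
    intro htop
    have h1 := hprox ub
    rw [htop, EReal.top_add_coe] at h1
    have h2 : g ub = ((g ub).toReal : EReal) := (EReal.coe_toReal hgub (hgnb ub)).symm
    rw [h2, ← EReal.coe_add] at h1
    exact (EReal.coe_ne_top _) (top_le_iff.mp h1)
  set gv : ℝ := (g v).toReal with hgvdef
  have hgve : g v = (gv : EReal) := (EReal.coe_toReal hgvt (hgnb v)).symm
  -- convexity of g
  have hGconv : ∀ (w w' : EuclideanSpace ℝ (Fin m)) (t : ℝ), 0 ≤ t → t ≤ 1 →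
      g (t • w + (1-t) • w') ≤ (t : EReal) * g w + ((1 - t : ℝ) : EReal) * g w' := by
    intro w w' t h0 h1
    rw [hg, hg, hg]
    have hT : T (t • w + (1-t) • w') = t • T w + (1-t) • T w' := by
      rw [map_add, map_smul, map_smul]
    rw [hT]
    exact fc_convex f x₀ hx₀ (hnobot x₀) hnobot _ _ t h0 h1
  -- subgradient of g at v
  set d : EuclideanSpace ℝ (Fin m) := α⁻¹ • (u - v) with hddef
  have hdg : ∀ w, g w ≠ ⊤ → gv + ⟪d, w - v⟫ ≤ (g w).toReal := by
    intro w hw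
    set gw : ℝ := (g w).toReal with hgwdef
    have hgwe : g w = (gw : EReal) := (EReal.coe_toReal hw (hgnb w)).symm
    set e : EuclideanSpace ℝ (Fin m) := w - v with hedef
    have hkey : ∀ t : ℝ, 0 < t → t ≤ 1 →
        -(t * ⟪e, e⟫) ≤ 2*α*(gw - gv) + 2 * ⟪v - u, e⟫ := by
      intro t ht0 ht1
      set z : EuclideanSpace ℝ (Fin m) := t • w + (1-t) • v with hzdef
      have hz_le : g z ≤ ((t * gw + (1-t) * gv : ℝ) : EReal) := by
        refine le_trans (hGconv w v t ht0.le ht1) ?_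
        rw [hgwe, hgve, ← EReal.coe_mul, ← EReal.coe_mul, ← EReal.coe_add]
      have hzt : g z ≠ ⊤ := ne_top_of_le_ne_top (EReal.coe_ne_top _) hz_le
      set gz : ℝ := (g z).toReal with hgzdef
      have hgze : g z = (gz : EReal) := (EReal.coe_toReal hzt (hgnb z)).symm
      have hzle : gz ≤ t * gw + (1-t) * gv := by
        rw [hgze] at hz_le; exact_mod_cast hz_le
      have h1 := hprox z
      rw [hgve, hgze, ← EReal.coe_add, ← EReal.coe_add] at h1
      have h2 : gv + 1/(2*α) * ‖v - u‖^2 ≤ gz + 1/(2*α) * ‖z - u‖^2 := by exact_mod_cast h1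
      have hzu : z - u = (v - u) + t • e := by
        rw [hzdef, hedef]; module
      have hnz : ‖z - u‖^2 = ‖v - u‖^2 + 2 * t * ⟪v - u, e⟫ + t^2 * ⟪e, e⟫ := by
        rw [hzu, ← real_inner_self_eq_norm_sq, ← real_inner_self_eq_norm_sq]
        rw [inner_add_right, inner_add_left, inner_add_left, real_inner_smul_left,
          real_inner_smul_left, real_inner_smul_right, real_inner_smul_right]
        rw [real_inner_comm e (v - u)]
        ring
      rw [hnz] at h2
      have h2α : (0:ℝ) < 2 * α := by linarith
      have h3' := mul_nonneg (le_of_lt h2α) (sub_nonneg.mpr h2)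
      have hexpand : 2*α*((gz + 1/(2*α) * (‖v - u‖^2 + 2*t*⟪v-u,e⟫ + t^2*⟪e,e⟫))
          - (gv + 1/(2*α) * ‖v - u‖^2))
          = 2*α*gz - 2*α*gv + 2*t*⟪v-u,e⟫ + t^2*⟪e,e⟫ := by
        field_simp
        ring
      rw [hexpand] at h3'
      have hmul := mul_le_mul_of_nonneg_left hzle (le_of_lt h2α)
      have h3 : 0 ≤ t * (2*α*(gw - gv) + 2 * ⟪v - u, e⟫ + t * ⟪e,e⟫) := by nlinarith [h3', hmul]
      have h4 := nonneg_of_mul_nonneg_right h3 ht0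
      linarith
    have h5 : 0 ≤ 2*α*(gw - gv) + 2 * ⟪v - u, e⟫ :=
      nonneg_of_forall_small _ _ (fun t ht0 ht1 => hkey t ht0 ht1)
    have h5' := mul_nonneg (inv_nonneg.mpr hα.le) h5
    have hexpand2 : α⁻¹ * (2*α*(gw - gv) + 2 * ⟪v - u, e⟫)
        = 2*(gw - gv) + 2*(α⁻¹ * ⟪v - u, e⟫) := by
      field_simp
    rw [hexpand2] at h5'
    have h6 : ⟪d, e⟫ = -(α⁻¹ * ⟪v - u, e⟫) := by
      rw [hddef, real_inner_smul_left]
      have : ⟪u - v, e⟫ = -⟪v - u, e⟫ := by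
        rw [show u - v = -(v - u) by abel, inner_neg_left]
      rw [this]; ring
    rw [hedef] at h6 ⊢
    rw [h6]
    linarith
  -- d is orthogonal to ker Aᵀ
  have hdker : ∀ k, T k = 0 → ⟪d, k⟫ = 0 := by
    intro k hk
    have hgvk : ∀ c : ℝ, g (v + c • k) = g v := by
      intro c
      rw [hg, hg]
      congr 1
      rw [map_add, map_smul, hk, smul_zero, add_zero]
    have h1 := hdg (v + k) (by rw [show v + k = v + (1:ℝ) • k by simp [one_smul], hgvk]; exact hgvt)
    have h2 := hdg (v - k) (by rw [show v - k = v + (-1:ℝ) • k by simp [sub_eq_add_neg], hgvk]; exact hgvt)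
    rw [show v + k - v = k by abel] at h1
    rw [show v - k - v = -k by abel, inner_neg_right] at h2
    have h3 : (g (v + k)).toReal = gv := by
      rw [show v + k = v + (1:ℝ) • k by simp [one_smul], hgvk]
    have h4 : (g (v - k)).toReal = gv := by
      rw [show v - k = v + (-1:ℝ) • k by simp [sub_eq_add_neg], hgvk]
    rw [h3] at h1
    rw [h4] at h2
    linarith
  -- d lies in the range of A
  have hdrange : ∃ x₁, A x₁ = d := by
    set R : Submodule ℝ (EuclideanSpace ℝ (Fin m)) := LinearMap.range (A : EuclideanSpace ℝ (Fin n) →ₗ[ℝ] EuclideanSpace ℝ (Fin m)) with hRdef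
    set e0 : EuclideanSpace ℝ (Fin m) := d - (Submodule.orthogonalProjection R d : EuclideanSpace ℝ (Fin m))
      with he0def
    have he0 : e0 ∈ Rᗮ := Submodule.sub_starProjection_mem_orthogonal d
    have hTe0 : T e0 = 0 := by
      have h1 : ⟪T e0, T e0⟫ = ⟪e0, A (T e0)⟫ := by
        rw [hTdef, ContinuousLinearMap.adjoint_inner_left]
      have h2 : ⟪A (T e0), e0⟫ = 0 := he0 _ (LinearMap.mem_range_self (A : EuclideanSpace ℝ (Fin n) →ₗ[ℝ] EuclideanSpace ℝ (Fin m)) (T e0))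
      rw [real_inner_comm] at h2
      rw [h2] at h1
      exact inner_self_eq_zero.mp h1
    have h3 : ⟪d, e0⟫ = 0 := hdker e0 hTe0
    have h4 : ⟪(Submodule.orthogonalProjection R d : EuclideanSpace ℝ (Fin m)), e0⟫ = 0 :=
      he0 _ (Submodule.orthogonalProjection R d).2
    have h5 : ⟪e0, e0⟫ = 0 := by
      rw [he0def, inner_sub_left, h3, h4]; ring
    have h6 : e0 = 0 := inner_self_eq_zero.mp h5
    have h7 : d = (Submodule.orthogonalProjection R d : EuclideanSpace ℝ (Fin m)) := by
      have := sub_eq_zero.mp (he0def ▸ h6 : d - _ = 0); exact this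
    obtain ⟨x₁, hx₁⟩ := (Submodule.orthogonalProjection R d).2
    exact ⟨x₁, hx₁.trans h7.symm⟩
  obtain ⟨x₁, hx₁⟩ := hdrange
  -- apply the key subgradient lemma to h̃ = F - ⟪x₁, ·⟫ on S = range Aᵀ
  set S : Submodule ℝ (EuclideanSpace ℝ (Fin n)) := LinearMap.range (T : EuclideanSpace ℝ (Fin m) →ₗ[ℝ] EuclideanSpace ℝ (Fin n)) with hSdef
  set p : EuclideanSpace ℝ (Fin n) := T v with hpdef
  set ht : EuclideanSpace ℝ (Fin n) → EReal := fun z => F z - ((⟪x₁, z⟫ : ℝ) : EReal) with htdef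
  have htnb : ∀ z, ht z ≠ ⊥ := fun z => ereal_sub_coe_ne_bot (hFnb z) _
  have htop_iff : ∀ z, ht z = ⊤ ↔ F z = ⊤ := fun z => ereal_sub_coe_eq_top_iff (hFnb z) _
  have hdomeq : {z | ht z ≠ ⊤} = {z | F z ≠ ⊤} := by
    ext z
    simp only [Set.mem_setOf_eq]
    exact not_congr (htop_iff z)
  have hFp : F p = (gv : EReal) := by rw [← hgve, hg v]
  have htp : ht p ≠ ⊤ := by
    rw [Ne, htop_iff, hFp]
    exact EReal.coe_ne_top _
  -- convexity of the tilted conjugate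
  have htconv : ∀ (z z' : EuclideanSpace ℝ (Fin n)) (t : ℝ), 0 ≤ t → t ≤ 1 →
      ht (t • z + (1-t) • z') ≤ (t : EReal) * ht z + ((1 - t : ℝ) : EReal) * ht z' := by
    intro z z' t h0 h1
    rcases eq_or_lt_of_le h0 with h0' | h0'
    · rw [← h0']; norm_num
    rcases eq_or_lt_of_le h1 with h1' | h1'
    · rw [h1']; norm_num
    by_cases hz : F z = ⊤
    · have hhz : ht z = ⊤ := (htop_iff z).mpr hz
      rw [hhz, EReal.coe_mul_top_of_pos h0', EReal.top_add_of_ne_bot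
        (ereal_mul_ne_bot (1-t) (by linarith) _ (htnb z'))]
      exact le_top
    · by_cases hz' : F z' = ⊤
      · have hhz' : ht z' = ⊤ := (htop_iff z').mpr hz'
        rw [hhz', EReal.coe_mul_top_of_pos (by linarith : (0:ℝ) < 1 - t),
          EReal.add_top_of_ne_bot (ereal_mul_ne_bot t h0' _ (htnb z))]
        exact le_top
      · obtain ⟨rz, hze⟩ : ∃ r : ℝ, F z = (r : EReal) :=
          ⟨(F z).toReal, (EReal.coe_toReal hz (hFnb z)).symm⟩
        obtain ⟨rz', hz'e⟩ : ∃ r : ℝ, F z' = (r : EReal) :=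
          ⟨(F z').toReal, (EReal.coe_toReal hz' (hFnb z')).symm⟩
        have hFc : F (t • z + (1-t) • z') ≤
            ((t * rz + (1-t) * rz' : ℝ) : EReal) := by
          refine le_trans (fc_convex f x₀ hx₀ (hnobot x₀) hnobot z z' t h0 h1) ?_
          show (t : EReal) * F z + ((1 - t : ℝ) : EReal) * F z' ≤ _
          rw [hze, hz'e, ← EReal.coe_mul, ← EReal.coe_mul, ← EReal.coe_add]
        have hin : ⟪x₁, t • z + (1-t) • z'⟫ = t * ⟪x₁, z⟫ + (1-t) * ⟪x₁, z'⟫ := by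
          rw [inner_add_right, real_inner_smul_right, real_inner_smul_right]
        show F (t • z + (1-t) • z') - ((⟪x₁, t • z + (1-t) • z'⟫ : ℝ) : EReal) ≤ _
        have hsub : F (t • z + (1-t) • z') - ((⟪x₁, t • z + (1-t) • z'⟫ : ℝ) : EReal)
            ≤ ((t * rz + (1-t) * rz' - ⟪x₁, t • z + (1-t) • z'⟫ : ℝ) : EReal) := by
          by_cases hcb : F (t • z + (1-t) • z') = ⊥
          · rw [hcb]
            simp
          · have hct : F (t • z + (1-t) • z') ≠ ⊤ := ne_top_of_le_ne_top (EReal.coe_ne_top _) hFc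
            rw [(EReal.coe_toReal hct hcb).symm, ← EReal.coe_sub]
            apply EReal.coe_le_coe_iff.mpr
            have : (F (t • z + (1-t) • z')).toReal ≤ t * rz + (1-t) * rz' := by
              rw [(EReal.coe_toReal hct hcb).symm] at hFc; exact_mod_cast hFc
            linarith
        refine le_trans hsub ?_
        have hrhs : (t : EReal) * ht z + ((1 - t : ℝ) : EReal) * ht z'
            = ((t * (rz - ⟪x₁, z⟫) + (1-t) * (rz' - ⟪x₁, z'⟫) : ℝ) : EReal) := by
          show (t : EReal) * (F z - ((⟪x₁, z⟫ : ℝ) : EReal)) + ((1 - t : ℝ) : EReal) * (F z' - ((⟪x₁, z'⟫ : ℝ) : EReal)) = _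
          rw [hze, hz'e, ← EReal.coe_sub, ← EReal.coe_sub, ← EReal.coe_mul, ← EReal.coe_mul,
            ← EReal.coe_add]
        rw [hrhs]
        apply EReal.coe_le_coe_iff.mpr
        rw [hin]
        ring_nf
        exact le_refl _
  -- p minimizes ht over S
  have htpe : ht p = ((gv - ⟪x₁, p⟫ : ℝ) : EReal) := by
    show F p - ((⟪x₁, p⟫ : ℝ) : EReal) = _
    rw [hFp, ← EReal.coe_sub]
  have hminS : ∀ s ∈ S, ht p ≤ ht s := by
    rintro s ⟨w, rfl⟩
    have hFTw : F (T w) = g w := (hg w).symm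
    by_cases hw : g w = ⊤
    · show ht p ≤ F (T w) - ((⟪x₁, T w⟫ : ℝ) : EReal)
      rw [hFTw, hw, EReal.top_sub_coe]
      exact le_top
    · have hgwe : g w = (((g w).toReal : ℝ) : EReal) := (EReal.coe_toReal hw (hgnb w)).symm
      show ht p ≤ F (T w) - ((⟪x₁, T w⟫ : ℝ) : EReal)
      rw [hFTw, htpe, hgwe, ← EReal.coe_sub]
      apply EReal.coe_le_coe_iff.mpr
      have h1 := hdg w hw
      have h2 : ⟪x₁, T w⟫ = ⟪d, w⟫ := by
        rw [ContinuousLinearMap.adjoint_inner_right, hx₁]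
      have h3 : ⟪x₁, p⟫ = ⟪d, v⟫ := by
        rw [hpdef, ContinuousLinearMap.adjoint_inner_right, hx₁]
      have h4 : ⟪d, w - v⟫ = ⟪d, w⟫ - ⟪d, v⟫ := inner_sub_right d w v
      rw [h2, h3]
      linarith
  have hsbS : sb ∈ S := ⟨ub, hub⟩
  obtain ⟨c, hcS, hcsub⟩ := key_subgradient ht htnb htconv S p ⟨v, rfl⟩ htp sb hsbS
    (by rw [hdomeq]; exact hsbri) hminS
  set x : EuclideanSpace ℝ (Fin n) := x₁ + c with hxdef
  have hAc : A c = 0 := by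
    have h1 : ⟪c, T (A c)⟫ = 0 := hcS _ (LinearMap.mem_range_self (T : EuclideanSpace ℝ (Fin m) →ₗ[ℝ] EuclideanSpace ℝ (Fin n)) (A c))
    have h2 := ContinuousLinearMap.adjoint_inner_right A c (A c)
    rw [hTdef] at h1
    rw [h1] at h2
    exact inner_self_eq_zero.mp h2.symm
  have hAx : A x = d := by rw [hxdef, map_add, hAc, add_zero, hx₁]
  have hveq : v = u - α • A x := by
    rw [hAx, hddef, smul_smul, mul_inv_cancel₀ (ne_of_gt hα), one_smul]
    abel
  -- full subgradient of F at p with slope x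
  have hsubF : ∀ z, F z ≠ ⊤ → gv + ⟪x, z - p⟫ ≤ (F z).toReal := by
    intro z hzt
    have h1 := hcsub z
    obtain ⟨rz, hze⟩ : ∃ r : ℝ, F z = (r : EReal) :=
      ⟨(F z).toReal, (EReal.coe_toReal hzt (hFnb z)).symm⟩
    have hrz : (F z).toReal = rz := by rw [hze]; exact EReal.toReal_coe rz
    rw [hrz]
    have htze : ht z = ((rz - ⟪x₁, z⟫ : ℝ) : EReal) := by
      show F z - ((⟪x₁, z⟫ : ℝ) : EReal) = _
      rw [hze, ← EReal.coe_sub]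
    rw [htpe, htze, ← EReal.coe_add] at h1
    have h2 : gv - ⟪x₁, p⟫ + ⟪c, z - p⟫ ≤ rz - ⟪x₁, z⟫ := by exact_mod_cast h1
    have h3 : ⟪x₁, z⟫ - ⟪x₁, p⟫ = ⟪x₁, z - p⟫ := (inner_sub_right x₁ z p).symm
    have h4 : ⟪x, z - p⟫ = ⟪x₁, z - p⟫ + ⟪c, z - p⟫ := inner_add_left x₁ c (z - p)
    linarith
  -- compute f x via biconjugacy
  have hup : fenchelConj F x ≤ ((⟪x, p⟫ - gv : ℝ) : EReal) := by
    rw [fenchelConj]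
    apply iSup_le
    intro z
    by_cases hzt : F z = ⊤
    · rw [hzt]; simp
    · rw [(EReal.coe_toReal hzt (hFnb z)).symm, ← EReal.coe_sub]
      apply EReal.coe_le_coe_iff.mpr
      have h1 := hsubF z hzt
      have h2 : ⟪x, z - p⟫ = ⟪x, z⟫ - ⟪x, p⟫ := inner_sub_right x z p
      linarith
  have hlo : ((⟪x, p⟫ - gv : ℝ) : EReal) ≤ fenchelConj F x := by
    have h1 := fc_young F x p
    rw [hFp, ← EReal.coe_sub] at h1
    exact h1
  have hfbc : fenchelConj F x = ((⟪x, p⟫ - gv : ℝ) : EReal) := le_antisymm hup hlo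
  have hfx : f x = ((⟪x, p⟫ - gv : ℝ) : EReal) := by
    apply le_antisymm
    · exact le_trans (biconj_ge f ⟨x₀, hx₀⟩ hnobot hconv hlsc sb hsbt x) (le_of_eq hfbc)
    · exact le_trans (le_of_eq hfbc.symm) (biconj_le f ⟨x₀, hx₀⟩ hnobot x)
  set ax : ℝ := ⟪x, p⟫ - gv with haxdef
  -- subgradient of f at x with slope p
  have hsubf : ∀ y, f y ≠ ⊤ → ax + ⟪p, y - x⟫ ≤ (f y).toReal := by
    intro y hy
    have h1 : ((⟪y, p⟫ - gv : ℝ) : EReal) ≤ f y := by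
      have h2 := fc_young F y p
      rw [hFp, ← EReal.coe_sub] at h2
      exact le_trans h2 (biconj_le f ⟨x₀, hx₀⟩ hnobot y)
    rw [(EReal.coe_toReal hy (hnobot y)).symm] at h1
    have h3 : ⟪y, p⟫ - gv ≤ (f y).toReal := by exact_mod_cast h1
    have h4 : ⟪p, y - x⟫ = ⟪p, y⟫ - ⟪p, x⟫ := inner_sub_right p y x
    have h5 : ⟪y, p⟫ = ⟪p, y⟫ := real_inner_comm p y
    have h6 : ⟪x, p⟫ = ⟪p, x⟫ := real_inner_comm p x
    rw [haxdef]
    linarith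
  refine ⟨x, ?_, hveq⟩
  intro y
  by_cases hy : f y = ⊤
  · rw [hy, EReal.top_sub_coe, EReal.top_add_coe]
    exact le_top
  · rw [hfx, (EReal.coe_toReal hy (hnobot y)).symm, ← EReal.coe_sub, ← EReal.coe_sub,
      ← EReal.coe_add, ← EReal.coe_add]
    apply EReal.coe_le_coe_iff.mpr
    have h1 := hsubf y hy
    have h2 : ⟪p, y - x⟫ = ⟪v, A y - A x⟫ := by
      rw [hpdef, ContinuousLinearMap.adjoint_inner_left, map_sub]
    have h3 : ⟪v, A y - A x⟫ = ⟪u, A y⟫ - ⟪u, A x⟫ - α * ⟪A x, A y⟫ + α * ‖A x‖^2 := by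
      rw [hveq, inner_sub_left, real_inner_smul_left]
      rw [inner_sub_right u (A y) (A x), inner_sub_right (A x) (A y) (A x),
        real_inner_self_eq_norm_sq]
      ring
    have hq2 : ‖A y - A x‖^2 = ‖A y‖^2 - 2 * ⟪A x, A y⟫ + ‖A x‖^2 := by
      rw [← real_inner_self_eq_norm_sq, ← real_inner_self_eq_norm_sq (A y),
        ← real_inner_self_eq_norm_sq (A x)]
      rw [inner_sub_left, inner_sub_right, inner_sub_right]
      rw [real_inner_comm (A y) (A x)]
      ring
    have hq3 : 0 ≤ α * (‖A y‖^2 - 2 * ⟪A x, A y⟫ + ‖A x‖^2) :=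
      mul_nonneg hα.le (hq2 ▸ sq_nonneg ‖A y - A x‖)
    rw [h2, h3] at h1
    nlinarith [h1, hq3]

/-- Prox characterization of `g = f* ∘ Aᵀ` (BCV / Ryu–Yin Fact): `v = prox_{αg}(u)` iff
there is `x` minimizing `y ↦ f(y) − ⟨u, Ay⟩ + (α/2)‖Ay‖²` with `v = u − αAx`. -/
theorem prox_conjugate_composition {n m : ℕ}
    (f : EuclideanSpace ℝ (Fin n) → EReal)
    (hproper : ∃ x, f x ≠ ⊤) (hnobot : ∀ x, f x ≠ ⊥)
    (hconv : ∀ x y : EuclideanSpace ℝ (Fin n), ∀ t : ℝ, 0 ≤ t → t ≤ 1 →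
      f (t • x + (1 - t) • y) ≤ (t : EReal) * f x + ((1 - t : ℝ) : EReal) * f y)
    (hlsc : LowerSemicontinuous f)
    (A : EuclideanSpace ℝ (Fin n) →L[ℝ] EuclideanSpace ℝ (Fin m))
    (g : EuclideanSpace ℝ (Fin m) → EReal)
    (hg : ∀ u, g u = fenchelConj f ((ContinuousLinearMap.adjoint A) u))
    (hri : (intrinsicInterior ℝ {x | fenchelConj f x ≠ ⊤} ∩
      Set.range (ContinuousLinearMap.adjoint A)).Nonempty)
    (α : ℝ) (hα : 0 < α) (u v : EuclideanSpace ℝ (Fin m)) :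
    (∀ w, g v + ((1 / (2 * α) * ‖v - u‖ ^ 2 : ℝ) : EReal) ≤
        g w + ((1 / (2 * α) * ‖w - u‖ ^ 2 : ℝ) : EReal)) ↔
    (∃ x : EuclideanSpace ℝ (Fin n),
      (∀ y, f x - ((⟪u, A x⟫ : ℝ) : EReal) + ((α / 2 * ‖A x‖ ^ 2 : ℝ) : EReal) ≤
            f y - ((⟪u, A y⟫ : ℝ) : EReal) + ((α / 2 * ‖A y‖ ^ 2 : ℝ) : EReal)) ∧
      v = u - α • A x) := by
  constructor
  · intro hprox
    exact prox_forward f hproper hnobot hconv hlsc A g hg hri α hα u v hprox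
  · rintro ⟨x, hxmin, hveq⟩ w
    exact prox_reverse f hproper hnobot hconv A g hg α hα u v x hxmin hveq w
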